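/- A finite planar point set P in general position satisfies Property Δ_k (every convex subset A ⊆ P has at most |A| − 3 + k points of P in the interior of its convex hull) if and only if every subset B ⊆ P has at most ⌊(|B| − 3 + k)/2⌋ points of P ∩ B lying in the interior of Conv(B). -/

import Mathlib

open scoped Classical

noncomputable section

/-- No three distinct points of `P` are collinear. -/
def GenPos (P : Finset ℂ) : Prop :=
  ∀ x ∈ P, ∀ y ∈ P, ∀ z ∈ P, x ≠ y → x ≠ z → y ≠ z → ¬ Collinear ℝ ({x, y, z} : Set ℂ)

/-- `A` is a convex subset of `P`: `A ⊆ P` and no point of `A` lies in the interior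
of the convex hull of `A`. -/
def ConvexSubset (P A : Finset ℂ) : Prop :=
  A ⊆ P ∧ ∀ a ∈ A, a ∉ interior (convexHull ℝ (A : Set ℂ))

/-- Points of `P` in the interior of the convex hull of `A`. -/
def intPts (P A : Finset ℂ) : Finset ℂ :=
  P.filter (fun x => x ∈ interior (convexHull ℝ (A : Set ℂ)))

/-- Property `Δ_k`: every convex subset `A ⊆ P` has at most `|A| + k - 3` points of `P`
in the interior of its convex hull. -/
def PropertyDelta (P : Finset ℂ) (k : ℕ) : Prop :=
  ∀ A : Finset ℂ, ConvexSubset P A →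
    ((intPts P A).card : ℤ) ≤ (A.card : ℤ) + (k : ℤ) - 3

/-- A point is internal for `P` if it lies in the interior of the convex hull of `P`. -/
def Internal (P : Finset ℂ) (x : ℂ) : Prop :=
  x ∈ interior (convexHull ℝ (P : Set ℂ))

/-- A point of `P` is extremal if it lies on the boundary of the convex hull of `P`. -/
def Extremal (P : Finset ℂ) (x : ℂ) : Prop :=
  x ∈ P ∧ ¬ Internal P x

/-- The line through two points, as a subset of the plane. -/
def lineThrough (u v : ℂ) : Set ℂ :=
  ↑(affineSpan ℝ ({u, v} : Set ℂ))

/-- Signed area test: the side of the line through `a, b` on which `x` lies. -/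
def cross2 (a b x : ℂ) : ℝ :=
  (b.re - a.re) * (x.im - a.im) - (b.im - a.im) * (x.re - a.re)

/-- The line through `w₁, w₂` is non-separating: all internal points of `P` lie
(weakly) on one side of it. -/
def NonSeparating (P : Finset ℂ) (w₁ w₂ : ℂ) : Prop :=
  (∀ x ∈ P, Internal P x → 0 ≤ cross2 w₁ w₂ x) ∨
  (∀ x ∈ P, Internal P x → cross2 w₁ w₂ x ≤ 0)

/-- A move of configurations: `z ∈ P` is replaced by a point `z'` lying in the interior of
a region of the complement of the arrangement `𝒜^z` (lines through pairs of points of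
`P - {z}`) adjacent to the region of `z`, the two regions being separated by the line `ℓ`
through `w₁, w₂ ∈ P`: the segment from `z` to `z'` crosses `ℓ` and no other line of `𝒜^z`. -/
def MoveAcross (P : Finset ℂ) (z z' w₁ w₂ : ℂ) : Prop :=
  z ∈ P ∧ w₁ ∈ P ∧ w₂ ∈ P ∧ w₁ ≠ w₂ ∧ z ≠ w₁ ∧ z ≠ w₂ ∧ z' ∉ P ∧
  z ∉ lineThrough w₁ w₂ ∧ z' ∉ lineThrough w₁ w₂ ∧
  (∃ p ∈ segment ℝ z z', p ∈ lineThrough w₁ w₂) ∧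
  (∀ u ∈ P, ∀ v ∈ P, u ≠ v → u ≠ z → v ≠ z → ({u, v} : Set ℂ) ≠ ({w₁, w₂} : Set ℂ) →
    ∀ p ∈ segment ℝ z z', p ∉ lineThrough u v)

/-- The configuration resulting from a move. -/
def movedConfig (P : Finset ℂ) (z z' : ℂ) : Finset ℂ :=
  insert z' (P.erase z)

/-- A `Δ_k`-move between configurations. -/
def DeltaMove (k : ℕ) (P Q : Finset ℂ) : Prop :=
  PropertyDelta P k ∧ PropertyDelta Q k ∧
  ∃ z z' w₁ w₂, MoveAcross P z z' w₁ w₂ ∧ Q = movedConfig P z z'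

/-- Every point of `P` lies on the boundary of the convex hull of `P`. -/
def ConvexPosition (P : Finset ℂ) : Prop :=
  ∀ x ∈ P, ¬ Internal P x


-- extreme point not in interior
lemma extremePoint_not_interior {s : Set ℂ} {x : ℂ}
    (hx : x ∈ s.extremePoints ℝ) : x ∉ interior s := by
  intro hint
  obtain ⟨ε, hε, hball⟩ := Metric.isOpen_iff.1 isOpen_interior x hint
  have hd : ‖((ε/2 : ℝ) : ℂ)‖ < ε := by
    rw [Complex.norm_real, Real.norm_eq_abs, abs_of_pos (by linarith)]; linarith
  have h1 : x - (ε/2 : ℝ) ∈ s := by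
    apply interior_subset; apply hball
    rw [Metric.mem_ball, Complex.dist_eq]
    simpa using hd
  have h2 : x + (ε/2 : ℝ) ∈ s := by
    apply interior_subset; apply hball
    rw [Metric.mem_ball, Complex.dist_eq]
    simpa using hd
  have hx' := (mem_extremePoints.1 hx).2 _ h1 _ h2 ?_
  · have h3 := hx'.1
    rw [sub_eq_self, Complex.ofReal_eq_zero] at h3
    linarith
  · refine ⟨1/2, 1/2, by norm_num, by norm_num, by norm_num, ?_⟩
    rw [Complex.real_smul, Complex.real_smul]; push_cast; ring

lemma hull_filter_eq (B : Finset ℂ) :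
    convexHull ℝ ((B.filter (fun x => x ∉ interior (convexHull ℝ (B : Set ℂ)))) : Set ℂ)
      = convexHull ℝ (B : Set ℂ) := by
  set S := convexHull ℝ (B : Set ℂ)
  apply le_antisymm
  · exact convexHull_mono (by intro x hx; simpa using (Finset.mem_filter.1 (by exact_mod_cast hx)).1)
  · have hcomp : IsCompact S := B.finite_toSet.isCompact_convexHull (𝕜 := ℝ)
    have hKM := closure_convexHull_extremePoints hcomp (convex_convexHull ℝ _)
    have hsub : S.extremePoints ℝ ⊆
        ((B.filter (fun x => x ∉ interior (convexHull ℝ (B : Set ℂ)))) : Set ℂ) := by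
      intro x hx
      have hxB : x ∈ (B : Set ℂ) := extremePoints_convexHull_subset hx
      have := extremePoint_not_interior hx
      simp only [Finset.coe_filter, Set.mem_setOf_eq]
      exact ⟨by exact_mod_cast hxB, this⟩
    calc S = closure (convexHull ℝ (S.extremePoints ℝ)) := hKM.symm
      _ ⊆ closure (convexHull ℝ ((B.filter (fun x => x ∉ interior (convexHull ℝ (B : Set ℂ)))) : Set ℂ)) :=
          closure_mono (convexHull_mono hsub)
      _ = _ := IsClosed.closure_eq ((Finset.finite_toSet _).isCompact_convexHull (𝕜 := ℝ)).isClosed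

/-- `P` satisfies Property `Δ_k` iff every subset `B ⊆ P` has at most
`⌊(|B| − 3 + k)/2⌋` of its points lying in the interior of its convex hull. -/
theorem propertyDelta_iff_internal_bound (P : Finset ℂ) (k : ℕ) (hgp : GenPos P) :
    PropertyDelta P k ↔
      ∀ B : Finset ℂ, B ⊆ P →
        2 * ((B.filter (fun x => x ∈ interior (convexHull ℝ (B : Set ℂ)))).card : ℤ)
          ≤ (B.card : ℤ) - 3 + (k : ℤ) := by
  constructor
  · intro h B hB
    set A := B.filter (fun x => x ∉ interior (convexHull ℝ (B : Set ℂ))) with hAdef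
    set I := B.filter (fun x => x ∈ interior (convexHull ℝ (B : Set ℂ))) with hIdef
    have hcard : A.card + I.card = B.card := by
      rw [hAdef, hIdef]
      simpa using Finset.card_filter_add_card_filter_not
        (s := B) (p := fun x => x ∉ interior (convexHull ℝ (B : Set ℂ)))
    have hhull : convexHull ℝ (A : Set ℂ) = convexHull ℝ (B : Set ℂ) := hull_filter_eq B
    have hconv : ConvexSubset P A := by
      refine ⟨(Finset.filter_subset _ _).trans hB, fun a ha => ?_⟩
      rw [hhull]
      exact (Finset.mem_filter.1 ha).2
    have hsub : I ⊆ intPts P A := by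
      intro x hx
      rw [Finset.mem_filter] at hx
      exact Finset.mem_filter.2 ⟨hB hx.1, by rw [hhull]; exact hx.2⟩
    have h1 : (I.card : ℤ) ≤ (intPts P A).card := by
      exact_mod_cast Finset.card_le_card hsub
    have h2 := h A hconv
    have : (A.card : ℤ) + (I.card : ℤ) = B.card := by exact_mod_cast hcard
    linarith
  · intro h A hA
    set B := A ∪ intPts P A with hBdef
    have hdisj : Disjoint A (intPts P A) := by
      rw [Finset.disjoint_left]
      intro a ha hma
      exact hA.2 a ha (Finset.mem_filter.1 hma).2
    have hBP : B ⊆ P := Finset.union_subset hA.1 (Finset.filter_subset _ _)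
    have hcard : B.card = A.card + (intPts P A).card := Finset.card_union_of_disjoint hdisj
    have hsub : intPts P A ⊆ B.filter (fun x => x ∈ interior (convexHull ℝ (B : Set ℂ))) := by
      intro x hx
      refine Finset.mem_filter.2 ⟨Finset.subset_union_right hx, ?_⟩
      have hmono : convexHull ℝ (A : Set ℂ) ⊆ convexHull ℝ (B : Set ℂ) := by
        apply convexHull_mono
        rw [hBdef]; push_cast
        exact Set.subset_union_left
      exact interior_mono hmono (Finset.mem_filter.1 hx).2
    have h1 : ((intPts P A).card : ℤ) ≤
        (B.filter (fun x => x ∈ interior (convexHull ℝ (B : Set ℂ)))).card := by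
      exact_mod_cast Finset.card_le_card hsub
    have h2 := h B hBP
    have h3 : (B.card : ℤ) = A.card + (intPts P A).card := by exact_mod_cast hcard
    linarith
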